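/- Let A be a prime nontrivial associative superalgebra over a commutative unital ring Φ with 1/2 ∈ Φ, and let L be a Lie ideal of A. If there exists a nonzero graded ideal I of A with [I, L] = 0, then L ⊆ Z. -/

import Mathlib

/-! Basic notions for associative superalgebras (ℤ/2-graded algebras). -/

variable {Φ A : Type*} [CommRing Φ] [Ring A] [Algebra Φ A]
variable (𝒜 : ZMod 2 → Submodule Φ A) [GradedAlgebra 𝒜]

/-- The superbracket of elements of degrees `i` and `j`:
`[a,b] = a*b - (-1)^(|a||b|) b*a`. -/
def sbrak (i j : ZMod 2) (a b : A) : A :=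
  a * b - ((-1 : ℤ) ^ (i.val * j.val)) • (b * a)

/-- The bilinear extension of the superbracket to all of `A`, via the
homogeneous components. -/
def superComm (x y : A) : A :=
  ∑ i : ZMod 2, ∑ j : ZMod 2,
    sbrak i j (DirectSum.decompose 𝒜 x i : A) (DirectSum.decompose 𝒜 y j : A)

/-- A graded submodule: one containing all homogeneous components of its
elements. -/
def IsGradedSub (M : Submodule Φ A) : Prop :=
  ∀ (i : ZMod 2), ∀ x ∈ M, (DirectSum.decompose 𝒜 x i : A) ∈ M

/-- A graded two-sided ideal of the superalgebra `A`. -/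
def IsGradedIdeal (I : Submodule Φ A) : Prop :=
  IsGradedSub 𝒜 I ∧ ∀ (a : A), ∀ x ∈ I, a * x ∈ I ∧ x * a ∈ I

/-- `A` is a prime superalgebra: for graded ideals `I, J`, `IJ = 0` implies
`I = 0` or `J = 0`. -/
def SuperPrime : Prop :=
  ∀ I J : Submodule Φ A, IsGradedIdeal 𝒜 I → IsGradedIdeal 𝒜 J →
    (∀ x ∈ I, ∀ y ∈ J, x * y = 0) → I = ⊥ ∨ J = ⊥

/-- `A` is a semiprime superalgebra: for graded ideals `I`, `I² = 0` implies
`I = 0`. -/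
def SuperSemiprime : Prop :=
  ∀ I : Submodule Φ A, IsGradedIdeal 𝒜 I →
    (∀ x ∈ I, ∀ y ∈ I, x * y = 0) → I = ⊥

/-- `A` is a nontrivial superalgebra: its odd part is nonzero. -/
def SuperNontrivial : Prop := 𝒜 1 ≠ ⊥

/-- `Z`: the even part of the center of `A`. -/
def evenCenter : Set A := {z | z ∈ 𝒜 0 ∧ ∀ a : A, a * z = z * a}

/-- A Lie ideal of `A`: a graded submodule `L` with `[L, A] ⊆ L`
(superbracket). -/
def IsSuperLieIdeal (L : Submodule Φ A) : Prop :=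
  IsGradedSub 𝒜 L ∧ ∀ l ∈ L, ∀ a : A, superComm 𝒜 l a ∈ L

/-- A graded subalgebra of `A`: a graded submodule closed under
multiplication. -/
def IsGradedSubalg (W : Submodule Φ A) : Prop :=
  IsGradedSub 𝒜 W ∧ ∀ x ∈ W, ∀ y ∈ W, x * y ∈ W

/-- A submodule `M` is dense in `A` if the (non-unital) subalgebra generated
by `M` contains a nonzero graded ideal of `A`. -/
def SuperDense (M : Submodule Φ A) : Prop :=
  ∃ I : Submodule Φ A, IsGradedIdeal 𝒜 I ∧ I ≠ ⊥ ∧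
    ∀ x ∈ I, x ∈ NonUnitalAlgebra.adjoin Φ (M : Set A)

/-- Witness that `A` is a central order in the Clifford superalgebra of a
nondegenerate quadratic space of dimension `n` over the field `Z⁻¹Z`:
an embedding `f` of `A` into such a Clifford superalgebra, preserving the
grading, inverting the nonzero elements of `Z`, and such that every element of
the Clifford superalgebra (resp. of its base field) is a fraction of elements
of `A` (resp. of `Z`) over `Z`. -/
structure CentralOrderInCliffWitness (n : ℕ) : Type _ where
  K : Type
  [fieldK : Field K]
  V : Type
  [acgV : AddCommGroup V]
  [modV : Module K V]
  Q : QuadraticForm K V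
  dim : Module.finrank K V = n
  nondeg : LinearMap.BilinForm.Nondegenerate (QuadraticMap.polarBilin Q)
  f : A →+* CliffordAlgebra Q
  inj : Function.Injective f
  graded : ∀ i : ZMod 2, ∀ x ∈ 𝒜 i, f x ∈ CliffordAlgebra.evenOdd Q i
  unitZ : ∀ z ∈ evenCenter 𝒜, z ≠ 0 → IsUnit (f z)
  centralZ : ∀ z ∈ evenCenter 𝒜, ∀ c : CliffordAlgebra Q, c * f z = f z * c
  fracSurj : ∀ (i : ZMod 2), ∀ c ∈ CliffordAlgebra.evenOdd Q i,
    ∃ z ∈ evenCenter 𝒜, z ≠ 0 ∧ ∃ a ∈ 𝒜 i, f z * c = f a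
  baseField : ∀ k : K, ∃ z ∈ evenCenter 𝒜, z ≠ 0 ∧ ∃ w ∈ evenCenter 𝒜,
    algebraMap K (CliffordAlgebra Q) k * f z = f w

/-- `A` is a central order in `C(n)`. -/
def IsCentralOrderInCliff (n : ℕ) : Prop :=
  (∃ z ∈ evenCenter 𝒜, z ≠ 0) ∧ Nonempty (CentralOrderInCliffWitness 𝒜 n)


/-! ### Auxiliary lemmas for the proof -/

section Aux
variable {𝒜}

lemma aux_decompose_add_eq (x : A) :
    (DirectSum.decompose 𝒜 x 0 : A) + (DirectSum.decompose 𝒜 x 1 : A) = x := by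
  classical
  conv_rhs => rw [← DirectSum.sum_support_decompose 𝒜 x]
  rw [show (DirectSum.decompose 𝒜 x 0 : A) + (DirectSum.decompose 𝒜 x 1 : A) = ∑ i : ZMod 2, (DirectSum.decompose 𝒜 x i : A) from (Fin.sum_univ_two (fun i => (DirectSum.decompose 𝒜 x i : A))).symm]
  exact (Finset.sum_subset (Finset.subset_univ _) (by
    intro i _ hi
    simp [DFinsupp.notMem_support_iff.mp hi])).symm

lemma aux_decompose_mem {M : Submodule Φ A} {y : A} {c : ZMod 2}
    (hy : y ∈ 𝒜 c) (hyM : y ∈ M) (i : ZMod 2) :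
    (DirectSum.decompose 𝒜 y i : A) ∈ M := by
  by_cases hc : c = i
  · subst hc; rw [DirectSum.decompose_of_mem_same 𝒜 hy]; exact hyM
  · rw [DirectSum.decompose_of_mem_ne 𝒜 hy hc]; exact M.zero_mem

lemma aux_superComm_eq_sbrak {i j : ZMod 2} {x y : A} (hx : x ∈ 𝒜 i) (hy : y ∈ 𝒜 j) :
    superComm 𝒜 x y = sbrak i j x y := by
  classical
  unfold superComm
  have key : ∀ k l : ZMod 2,
      sbrak k l (DirectSum.decompose 𝒜 x k : A) (DirectSum.decompose 𝒜 y l : A)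
      = if k = i ∧ l = j then sbrak i j x y else 0 := by
    intro k l
    by_cases hk : k = i
    · by_cases hl : l = j
      · subst hk; subst hl
        rw [DirectSum.decompose_of_mem_same 𝒜 hx, DirectSum.decompose_of_mem_same 𝒜 hy]
        simp
      · rw [DirectSum.decompose_of_mem_ne 𝒜 hy (fun h => hl h.symm)]
        simp [sbrak, hl]
    · rw [DirectSum.decompose_of_mem_ne 𝒜 hx (fun h => hk h.symm)]
      simp [sbrak, hk]
  simp only [key]
  simp [ite_and, Finset.sum_ite_eq']

lemma aux_sign_add (i j d : ZMod 2) :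
    ((-1:ℤ)^((i+j).val*d.val)) = (-1:ℤ)^(j.val*d.val) * (-1:ℤ)^(i.val*d.val) := by
  revert i j d; decide

lemma aux_sbrak_mul_left (i j d : ZMod 2) (u v w : A) :
    sbrak (i+j) d (u*v) w
      = u * sbrak j d v w + ((-1:ℤ)^(j.val*d.val)) • (sbrak i d u w * v) := by
  simp only [sbrak, aux_sign_add, mul_sub, sub_mul, smul_sub, mul_smul_comm,
    smul_mul_assoc, smul_smul, mul_assoc]
  abel

variable (𝒜)

lemma aux_span_graded_ideal {e : ZMod 2} {w : A} (hw : w ∈ 𝒜 e) :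
    IsGradedIdeal 𝒜 (Submodule.span Φ (Set.range fun p : A × A => p.1 * w * p.2)) := by
  set S := (Set.range fun p : A × A => p.1 * w * p.2) with hS
  set J := Submodule.span Φ S with hJ
  have hgen : ∀ u v : A, u * w * v ∈ J := fun u v =>
    Submodule.subset_span ⟨(u, v), rfl⟩
  constructor
  · intro i x hx
    induction hx using Submodule.span_induction with
    | mem y hy =>
      obtain ⟨⟨u, v⟩, rfl⟩ := hy
      beta_reduce
      have expand : u * w * v =
          (DirectSum.decompose 𝒜 u 0 : A) * w * (DirectSum.decompose 𝒜 v 0 : A)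
        + ((DirectSum.decompose 𝒜 u 0 : A) * w * (DirectSum.decompose 𝒜 v 1 : A)
        + ((DirectSum.decompose 𝒜 u 1 : A) * w * (DirectSum.decompose 𝒜 v 0 : A)
        + (DirectSum.decompose 𝒜 u 1 : A) * w * (DirectSum.decompose 𝒜 v 1 : A))) := by
        conv_lhs => rw [← aux_decompose_add_eq (𝒜 := 𝒜) u, ← aux_decompose_add_eq (𝒜 := 𝒜) v]
        noncomm_ring
      rw [expand]
      simp only [DirectSum.decompose_add, DirectSum.add_apply, Submodule.coe_add]
      have memh : ∀ (k m : ZMod 2),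
          (DirectSum.decompose 𝒜
            ((DirectSum.decompose 𝒜 u k : A) * w * (DirectSum.decompose 𝒜 v m : A)) i : A) ∈ J := by
        intro k m
        exact aux_decompose_mem
          (SetLike.mul_mem_graded (SetLike.mul_mem_graded (SetLike.coe_mem _) hw)
            (SetLike.coe_mem _))
          (hgen _ _) i
      exact add_mem (memh 0 0) (add_mem (memh 0 1) (add_mem (memh 1 0) (memh 1 1)))
    | zero => simp
    | add x y hx hy ihx ihy =>
      rw [DirectSum.decompose_add]
      exact add_mem ihx ihy
    | smul c x hx ih =>
      rw [DirectSum.decompose_smul]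
      exact Submodule.smul_mem _ c ih
  · intro a x hx
    constructor
    · induction hx using Submodule.span_induction with
      | mem y hy =>
        obtain ⟨⟨u, v⟩, rfl⟩ := hy
        beta_reduce
        have : a * (u * w * v) = (a * u) * w * v := by noncomm_ring
        rw [this]; exact hgen _ _
      | zero => simp
      | add x y hx hy ihx ihy => rw [mul_add]; exact add_mem ihx ihy
      | smul c x hx ih => rw [mul_smul_comm]; exact Submodule.smul_mem _ c ih
    · induction hx using Submodule.span_induction with
      | mem y hy =>
        obtain ⟨⟨u, v⟩, rfl⟩ := hy
        beta_reduce
        have : (u * w * v) * a = u * w * (v * a) := by noncomm_ring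
        rw [this]; exact hgen _ _
      | zero => simp
      | add x y hx hy ihx ihy => rw [add_mul]; exact add_mem ihx ihy
      | smul c x hx ih => rw [smul_mul_assoc]; exact Submodule.smul_mem _ c ih

end Aux

/-- Let `A` be a prime nontrivial associative superalgebra over `Φ` with
`1/2 ∈ Φ`, and `L` a Lie ideal of `A`. If there is a nonzero graded ideal `I`
of `A` with `[I, L] = 0`, then `L ⊆ Z`. -/
theorem lieIdeal_central_of_ideal_brackets_zero
    (h2 : IsUnit (2 : Φ)) (hp : SuperPrime 𝒜) (hnt : SuperNontrivial 𝒜)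
    (L : Submodule Φ A) (hL : IsSuperLieIdeal 𝒜 L)
    (I : Submodule Φ A) (hI : IsGradedIdeal 𝒜 I) (hIne : I ≠ ⊥)
    (hIL : ∀ x ∈ I, ∀ l ∈ L, superComm 𝒜 x l = 0) :
    (L : Set A) ⊆ evenCenter 𝒜 := by
  classical
  -- Step 0: superbrackets of homogeneous elements of I with homogeneous elements of L vanish
  have hA : ∀ (i d : ZMod 2) (x : A), x ∈ I → x ∈ 𝒜 i →
      ∀ m ∈ L, m ∈ 𝒜 d → sbrak i d x m = 0 := by
    intro i d x hxI hxi m hmL hmd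
    rw [← aux_superComm_eq_sbrak hxi hmd]
    exact hIL x hxI m hmL
  -- Step 1: x * [a, m] = 0 for homogeneous x ∈ I, homogeneous a, homogeneous m ∈ L
  have h1 : ∀ (d : ZMod 2) (m : A), m ∈ L → m ∈ 𝒜 d →
      ∀ (i : ZMod 2) (x : A), x ∈ I → x ∈ 𝒜 i →
      ∀ (j : ZMod 2) (a : A), a ∈ 𝒜 j → x * sbrak j d a m = 0 := by
    intro d m hmL hmd i x hxI hxi j a haj
    have e := aux_sbrak_mul_left (A := A) i j d x a m
    rw [hA i d x hxI hxi m hmL hmd,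
      hA (i+j) d (x*a) ((hI.2 a x hxI).2) (SetLike.mul_mem_graded hxi haj) m hmL hmd] at e
    simpa using e.symm
  -- Step 2: drop homogeneity of x
  have h2' : ∀ (d : ZMod 2) (m : A), m ∈ L → m ∈ 𝒜 d →
      ∀ x ∈ I, ∀ (j : ZMod 2) (a : A), a ∈ 𝒜 j → x * sbrak j d a m = 0 := by
    intro d m hmL hmd x hxI j a haj
    conv_lhs => rw [← aux_decompose_add_eq (𝒜 := 𝒜) x]
    rw [add_mul, h1 d m hmL hmd 0 _ (hI.1 0 x hxI) (SetLike.coe_mem _) j a haj,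
      h1 d m hmL hmd 1 _ (hI.1 1 x hxI) (SetLike.coe_mem _) j a haj, add_zero]
  -- Step 3: x * (b * [a, m]) = 0 for homogeneous b
  have h3 : ∀ (d : ZMod 2) (m : A), m ∈ L → m ∈ 𝒜 d →
      ∀ x ∈ I, ∀ (k : ZMod 2) (b : A), b ∈ 𝒜 k →
      ∀ (j : ZMod 2) (a : A), a ∈ 𝒜 j → x * (b * sbrak j d a m) = 0 := by
    intro d m hmL hmd x hxI k b hbk j a haj
    have e2 : x * sbrak (k+j) d (b*a) m = 0 :=
      h2' d m hmL hmd x hxI (k+j) (b*a) (SetLike.mul_mem_graded hbk haj)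
    rw [aux_sbrak_mul_left, mul_add, mul_smul_comm,
      ← mul_assoc x (sbrak k d b m) a,
      h2' d m hmL hmd x hxI k b hbk, zero_mul, smul_zero, add_zero] at e2
    exact e2
  -- Step 4: drop homogeneity of b
  have h4 : ∀ (d : ZMod 2) (m : A), m ∈ L → m ∈ 𝒜 d →
      ∀ x ∈ I, ∀ (b : A), ∀ (j : ZMod 2) (a : A), a ∈ 𝒜 j →
      x * (b * sbrak j d a m) = 0 := by
    intro d m hmL hmd x hxI b j a haj
    conv_lhs => rw [← aux_decompose_add_eq (𝒜 := 𝒜) b]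
    rw [add_mul, mul_add, h3 d m hmL hmd x hxI 0 _ (SetLike.coe_mem _) j a haj,
      h3 d m hmL hmd x hxI 1 _ (SetLike.coe_mem _) j a haj, add_zero]
  -- Step 5: the superbracket of any homogeneous element with a homogeneous element of L is zero
  have hw0 : ∀ (d : ZMod 2) (m : A), m ∈ L → m ∈ 𝒜 d →
      ∀ (j : ZMod 2) (a : A), a ∈ 𝒜 j → sbrak j d a m = 0 := by
    intro d m hmL hmd j a haj
    set w := sbrak j d a m with hwdef
    have hw : w ∈ 𝒜 (j + d) := by
      rw [hwdef]
      unfold sbrak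
      refine sub_mem (SetLike.mul_mem_graded haj hmd) ?_
      have hma : m * a ∈ 𝒜 (j + d) := by
        rw [add_comm]; exact SetLike.mul_mem_graded hmd haj
      exact AddSubgroup.zsmul_mem (𝒜 (j+d)).toAddSubgroup hma _
    set J := Submodule.span Φ (Set.range fun p : A × A => p.1 * w * p.2) with hJdef
    have hJ : IsGradedIdeal 𝒜 J := aux_span_graded_ideal 𝒜 hw
    have hIJ : ∀ x ∈ I, ∀ y ∈ J, x * y = 0 := by
      intro x hx y hy
      induction hy using Submodule.span_induction with
      | mem y hy =>
        obtain ⟨⟨u, v⟩, rfl⟩ := hy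
        beta_reduce
        have e : x * (u * w * v) = (x * (u * w)) * v := by noncomm_ring
        rw [e, h4 d m hmL hmd x hx u j a haj, zero_mul]
      | zero => rw [mul_zero]
      | add y z hy hz ihy ihz => rw [mul_add, ihy, ihz, add_zero]
      | smul c y hy ih => rw [mul_smul_comm, ih, smul_zero]
    rcases hp I J hI hJ hIJ with h | h
    · exact absurd h hIne
    · have hwJ : w ∈ J := Submodule.subset_span ⟨(1, 1), by simp⟩
      rw [h] at hwJ
      simpa using hwJ
  -- Now finish
  intro l hlL
  set l0 := (DirectSum.decompose 𝒜 l 0 : A) with hl0def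
  set l1 := (DirectSum.decompose 𝒜 l 1 : A) with hl1def
  have hl0L : l0 ∈ L := hL.1 0 l hlL
  have hl1L : l1 ∈ L := hL.1 1 l hlL
  have hl0m : l0 ∈ 𝒜 0 := SetLike.coe_mem _
  have hl1m : l1 ∈ 𝒜 1 := SetLike.coe_mem _
  -- l0 is central
  have hc0 : ∀ a : A, a * l0 = l0 * a := by
    have hj : ∀ (j : ZMod 2) (b : A), b ∈ 𝒜 j → b * l0 = l0 * b := by
      intro j b hbj
      have e := hw0 0 l0 hl0L hl0m j b hbj
      unfold sbrak at e
      rw [show ((0 : ZMod 2)).val = 0 from rfl, Nat.mul_zero, pow_zero, one_smul] at e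
      exact sub_eq_zero.mp e
    intro a
    conv_lhs => rw [← aux_decompose_add_eq (𝒜 := 𝒜) a]
    conv_rhs => rw [← aux_decompose_add_eq (𝒜 := 𝒜) a]
    rw [add_mul, mul_add, hj 0 _ (SetLike.coe_mem _), hj 1 _ (SetLike.coe_mem _)]
  -- l1 supercommutes with homogeneous elements
  have hsc1 : ∀ (j : ZMod 2) (b : A), b ∈ 𝒜 j →
      b * l1 = ((-1:ℤ)^(j.val * (1 : ZMod 2).val)) • (l1 * b) := by
    intro j b hbj
    have e := hw0 1 l1 hl1L hl1m j b hbj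
    unfold sbrak at e
    exact sub_eq_zero.mp e
  -- l1 squares to zero
  have hsq : l1 * l1 = 0 := by
    have e := hsc1 1 l1 hl1m
    rw [show ((1 : ZMod 2)).val = 1 from rfl, Nat.mul_one, pow_one, neg_one_smul] at e
    have e2 : l1 * l1 + l1 * l1 = 0 := eq_neg_iff_add_eq_zero.mp e
    have e3 : (2 : Φ) • (l1 * l1) = 0 := by rw [two_smul]; exact e2
    obtain ⟨u, hu⟩ := h2
    have e4 : (↑u⁻¹ : Φ) • ((2 : Φ) • (l1 * l1)) = 0 := by rw [e3, smul_zero]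
    rwa [smul_smul, ← hu, Units.inv_mul, one_smul] at e4
  -- l1 annihilates A in the middle
  have hmid : ∀ b : A, l1 * b * l1 = 0 := by
    have hmidh : ∀ (k : ZMod 2) (b : A), b ∈ 𝒜 k → l1 * b * l1 = 0 := by
      intro k b hbk
      rw [mul_assoc, hsc1 k b hbk, mul_smul_comm, ← mul_assoc, hsq, zero_mul, smul_zero]
    intro b
    conv_lhs => rw [← aux_decompose_add_eq (𝒜 := 𝒜) b]
    rw [mul_add, add_mul, hmidh 0 _ (SetLike.coe_mem _), hmidh 1 _ (SetLike.coe_mem _),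
      add_zero]
  -- the ideal generated by l1 squares to zero, so l1 = 0
  have hl1z : l1 = 0 := by
    set K := Submodule.span Φ (Set.range fun p : A × A => p.1 * l1 * p.2) with hKdef
    have hK : IsGradedIdeal 𝒜 K := aux_span_graded_ideal 𝒜 hl1m
    have hKK : ∀ x ∈ K, ∀ y ∈ K, x * y = 0 := by
      intro x hx y hy
      induction hy using Submodule.span_induction with
      | mem y hyg =>
        obtain ⟨⟨u, v⟩, rfl⟩ := hyg
        beta_reduce
        induction hx using Submodule.span_induction with
        | mem x hxg =>
          obtain ⟨⟨u', v'⟩, rfl⟩ := hxg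
          beta_reduce
          have e : (u' * l1 * v') * (u * l1 * v) = u' * (l1 * (v' * u) * l1) * v := by
            noncomm_ring
          rw [e, hmid (v' * u), mul_zero, zero_mul]
        | zero => rw [zero_mul]
        | add x z hx hz ihx ihz => rw [add_mul, ihx, ihz, add_zero]
        | smul c x hx ih => rw [smul_mul_assoc, ih, smul_zero]
      | zero => rw [mul_zero]
      | add y z hy hz ihy ihz => rw [mul_add, ihy, ihz, add_zero]
      | smul c y hy ih => rw [mul_smul_comm, ih, smul_zero]
    rcases hp K K hK hK hKK with h | h <;>
    · have hmemK : l1 ∈ K := Submodule.subset_span ⟨(1, 1), by simp⟩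
      rw [h] at hmemK
      simpa using hmemK
  -- conclude
  have hldec : l0 + l1 = l := aux_decompose_add_eq (𝒜 := 𝒜) l
  rw [hl1z, add_zero] at hldec
  exact ⟨hldec ▸ hl0m, fun a => hldec ▸ hc0 a⟩
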